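/- Let X be a finite indecomposable quandle, G_X its enveloping group, and π : G_X → Ḡ_X the projection onto the finite enveloping group. Then (1) for every u ∈ G_X, the restriction of π to the conjugacy class of u in G_X is injective (hence a quandle isomorphism onto its image), and (2) the canonical map ∂ : X → G_X is injective if and only if π ∘ ∂ : X → Ḡ_X is injective. -/

import Mathlib

open Quandles

/-- The inner group of a rack: the subgroup of permutations generated by the
translations `φᵢ = (i ◃ ·)`. -/
def quandleInn (X : Type) [Rack X] : Subgroup (Equiv.Perm X) :=
  Subgroup.closure (Set.range (fun i : X => Rack.act' i))

/-- A quandle is indecomposable if its inner group acts transitively. -/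
def QuandleIndecomposable (X : Type) [Rack X] : Prop :=
  ∀ x y : X, ∃ f ∈ quandleInn X, f x = y

/-- The kernel of the projection from the enveloping group of a quandle to its finite
enveloping group: the normal closure of the set of elements `x_i ^ |φᵢ|`. -/
def envelKer (X : Type) [Quandle X] : Subgroup (Rack.EnvelGroup X) :=
  Subgroup.normalClosure
    {w | ∃ i : X, w = (Rack.toEnvelGroup X i : Rack.EnvelGroup X) ^ orderOf (Rack.act' i)}

instance (X : Type) [Quandle X] : (envelKer X).Normal :=
  Subgroup.normalClosure_normal


def ee (X : Type) [Quandle X] (i : X) : Rack.EnvelGroup X := Rack.toEnvelGroup X i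

lemma ee_act (X : Type) [Quandle X] (i j : X) :
    ee X (i ◃ j) = ee X i * ee X j * (ee X i)⁻¹ := by
  have := (Rack.toEnvelGroup X).map_act' (x := i) (y := j)
  simpa [Quandle.conj_act_eq_conj, ee] using this

lemma mem_closure_range (X : Type) [Quandle X] (g : Rack.EnvelGroup X) :
    g ∈ Subgroup.closure (Set.range (ee X)) := by
  induction g using Quotient.inductionOn with
  | h a =>
    induction a with
    | unit => exact Subgroup.one_mem _
    | incl x => exact Subgroup.subset_closure ⟨x, rfl⟩
    | mul a b ha hb => exact Subgroup.mul_mem _ ha hb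
    | inv a ha => exact Subgroup.inv_mem _ ha

lemma ee_pow_conj (X : Type) [Quandle X] (i j : X) (n : ℕ) :
    ee X i ^ n * ee X j * (ee X i ^ n)⁻¹ = ee X ((Rack.act' i ^ n) j) := by
  induction n with
  | zero => simp
  | succ n ih =>
    rw [pow_succ' (Rack.act' i) n, Equiv.Perm.mul_apply, Rack.act'_apply, ee_act, ← ih,
      pow_succ' (ee X i) n]
    group

lemma ee_pow_central (X : Type) [Quandle X] (i : X) :
    ee X i ^ orderOf (Rack.act' i) ∈ Subgroup.center (Rack.EnvelGroup X) := by
  rw [Subgroup.mem_center_iff]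
  intro g
  have hg := mem_closure_range X g
  induction hg using Subgroup.closure_induction with
  | mem x hx =>
    obtain ⟨j, rfl⟩ := hx
    have h := ee_pow_conj X i j (orderOf (Rack.act' i))
    rw [pow_orderOf_eq_one, Equiv.Perm.one_apply, mul_inv_eq_iff_eq_mul] at h
    exact h.symm
  | one => simp
  | mul x y hx hy ihx ihy =>
    show Commute (x * y) _
    exact (Commute.mul_left ihx ihy)
  | inv x hx ihx =>
    show Commute x⁻¹ _
    exact Commute.inv_left ihx

lemma inn_act'_conj (X : Type) [Quandle X] {f : Equiv.Perm X} (hf : f ∈ quandleInn X) :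
    ∀ i : X, Rack.act' (f i) = f * Rack.act' i * f⁻¹ := by
  induction hf using Subgroup.closure_induction with
  | mem x hx =>
    obtain ⟨k, rfl⟩ := hx
    intro i
    rw [Rack.act'_apply]
    exact Rack.ad_conj k i
  | one => simp
  | mul x y hx hy ihx ihy =>
    intro i
    rw [Equiv.Perm.mul_apply, ihx, ihy]
    group
  | inv x hx ihx =>
    intro i
    have h := ihx (x⁻¹ i)
    rw [show x (x⁻¹ i) = i from x.apply_symm_apply i] at h
    rw [h]
    group

lemma inn_isConj (X : Type) [Quandle X] {f : Equiv.Perm X} (hf : f ∈ quandleInn X) :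
    ∀ i : X, IsConj (ee X i) (ee X (f i)) := by
  induction hf using Subgroup.closure_induction with
  | mem x hx =>
    obtain ⟨k, rfl⟩ := hx
    intro i
    rw [Rack.act'_apply]
    exact isConj_iff.mpr ⟨ee X k, (ee_act X k i).symm⟩
  | one => intro i; simp only [Equiv.Perm.one_apply]; exact IsConj.refl _
  | mul x y hx hy ihx ihy =>
    intro i
    rw [Equiv.Perm.mul_apply]
    exact (ihy i).trans (ihx (y i))
  | inv x hx ihx =>
    intro i
    have h := ihx (x⁻¹ i)
    rw [show x (x⁻¹ i) = i from x.apply_symm_apply i] at h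
    exact h.symm

lemma inn_pow_eq (X : Type) [Quandle X] {f : Equiv.Perm X} (hf : f ∈ quandleInn X) :
    ∀ i : X, ee X (f i) ^ orderOf (Rack.act' (f i)) = ee X i ^ orderOf (Rack.act' i) := by
  induction hf using Subgroup.closure_induction with
  | mem x hx =>
    obtain ⟨k, rfl⟩ := hx
    intro i
    rw [Rack.act'_apply]
    have horder : orderOf (Rack.act' (k ◃ i)) = orderOf (Rack.act' i) := by
      have hsc : SemiconjBy (Rack.act' k) (Rack.act' i) (Rack.act' (k ◃ i)) := by
        unfold SemiconjBy
        rw [Rack.ad_conj k i]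
        group
      exact (hsc.orderOf_eq (Rack.act' k)).symm
    rw [horder, ee_act, conj_pow]
    have hc := Subgroup.mem_center_iff.mp (ee_pow_central X i) (ee X k)
    rw [hc]
    group
  | one => simp
  | mul x y hx hy ihx ihy =>
    intro i
    rw [Equiv.Perm.mul_apply, ihx (y i), ihy i]
  | inv x hx ihx =>
    intro i
    have h := ihx (x⁻¹ i)
    rw [show x (x⁻¹ i) = i from x.apply_symm_apply i] at h
    exact h.symm

def degHom (X : Type) [Quandle X] : Rack.EnvelGroup X →* Multiplicative ℤ :=
  Rack.toEnvelGroup.map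
    ⟨fun _ => Multiplicative.ofAdd 1, by
      intro x y
      simp [Quandle.conj_act_eq_conj]⟩

lemma degHom_ee (X : Type) [Quandle X] (i : X) :
    degHom X (ee X i) = Multiplicative.ofAdd 1 := rfl

lemma degHom_isConj (X : Type) [Quandle X] {u v : Rack.EnvelGroup X} (h : IsConj u v) :
    degHom X u = degHom X v := by
  obtain ⟨c, hc⟩ := isConj_iff.mp h
  rw [← hc, map_mul, map_mul, map_inv, mul_right_comm]
  simp

lemma ker_eq_bot (X : Type) [Quandle X] [Finite X] (hind : QuandleIndecomposable X) (x₀ : X)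
    {k : Rack.EnvelGroup X} (hk : k ∈ envelKer X) (hdeg : degHom X k = 1) : k = 1 := by
  set z : Rack.EnvelGroup X := ee X x₀ ^ orderOf (Rack.act' x₀) with hz
  have hzc : z ∈ Subgroup.center (Rack.EnvelGroup X) := ee_pow_central X x₀
  have hnormal : (Subgroup.zpowers z).Normal := by
    constructor
    intro n hn g
    obtain ⟨m, rfl⟩ := hn
    have hc : g * z ^ m = z ^ m * g :=
      Subgroup.mem_center_iff.mp (Subgroup.zpow_mem (Subgroup.center _) hzc m) g
    have : g * z ^ m * g⁻¹ = z ^ m := by rw [hc]; group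
    rw [this]
    exact Subgroup.zpow_mem _ (Subgroup.mem_zpowers z) m
  have hle : envelKer X ≤ Subgroup.zpowers z := by
    apply Subgroup.normalClosure_le_normal
    rintro w ⟨i, rfl⟩
    obtain ⟨f, hf, rfl⟩ := hind x₀ i
    rw [show ((Rack.toEnvelGroup X (f x₀) : Rack.EnvelGroup X) = ee X (f x₀)) from rfl,
      inn_pow_eq X hf x₀]
    exact Subgroup.mem_zpowers z
  obtain ⟨m, rfl⟩ := hle hk
  have hN : (0 : ℕ) < orderOf (Rack.act' x₀) := orderOf_pos _
  have hdeg2 : degHom X (z ^ m) = Multiplicative.ofAdd (m * orderOf (Rack.act' x₀)) := by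
    rw [map_zpow, hz, map_pow, degHom_ee]
    rw [← ofAdd_nsmul, ← ofAdd_zsmul]
    norm_num [mul_comm]
  rw [hdeg2] at hdeg
  have hdisj : (orderOf (Rack.act' x₀) : ℤ) = 0 ∨ m = 0 := by
    have := congrArg Multiplicative.toAdd hdeg
    simpa using this
  have hm : m = 0 := by
    have h2 : (orderOf (Rack.act' x₀) : ℤ) ≠ 0 := by exact_mod_cast hN.ne'
    exact hdisj.resolve_left h2
  simp [hm]

theorem stmt12 (X : Type) [Quandle X] [Finite X] (hind : QuandleIndecomposable X) :
    (∀ u : Rack.EnvelGroup X,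
      Set.InjOn (QuotientGroup.mk' (envelKer X)) {v : Rack.EnvelGroup X | IsConj u v}) ∧
    (Function.Injective (fun i : X => (Rack.toEnvelGroup X i : Rack.EnvelGroup X)) ↔
      Function.Injective
        (fun i : X => QuotientGroup.mk' (envelKer X) (Rack.toEnvelGroup X i))) := by
  have h1 : ∀ u : Rack.EnvelGroup X,
      Set.InjOn (QuotientGroup.mk' (envelKer X)) {v : Rack.EnvelGroup X | IsConj u v} := by
    intro u v₁ hv₁ v₂ hv₂ h
    rcases isEmpty_or_nonempty X with hX | hX
    · have hsub : Subsingleton (Rack.EnvelGroup X) := by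
        constructor
        intro a b
        have ha := mem_closure_range X a
        have hb := mem_closure_range X b
        rw [Set.range_eq_empty, Subgroup.closure_empty, Subgroup.mem_bot] at ha hb
        rw [ha, hb]
      exact Subsingleton.elim v₁ v₂
    · obtain ⟨x₀⟩ := hX
      rw [QuotientGroup.mk'_eq_mk'] at h
      obtain ⟨k, hk, rfl⟩ := h
      have hd1 : degHom X u = degHom X v₁ := degHom_isConj X hv₁
      have hd2 : degHom X u = degHom X (v₁ * k) := degHom_isConj X hv₂
      rw [map_mul, ← hd1] at hd2
      have hdeg : degHom X k = 1 := (left_eq_mul.mp hd2)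
      rw [ker_eq_bot X hind x₀ hk hdeg, mul_one]
  refine ⟨h1, ⟨fun hinj i j h => ?_, fun hinj i j h => hinj (congrArg _ h)⟩⟩
  obtain ⟨f, hf, rfl⟩ := hind i j
  have hc : IsConj (ee X i) (ee X (f i)) := inn_isConj X hf i
  exact hinj (h1 (ee X i) (IsConj.refl (ee X i)) hc h)
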